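/- Let 𝒳 ⊆ ℝ^n be a nonempty convex set, α, μ > 0, G, M ≥ 0, v ≥ 0. Let f : ℝ^n → ℝ be convex and differentiable at x₀ ∈ 𝒳 with ‖∇f(x₀)‖ ≤ G, let λ ∈ ℝ^m with λ ≥ 0, let g, g' : ℝ^n → ℝ^m with the components of g convex and ‖[g'(x) − g(x)]^+‖ ≤ v for all x ∈ 𝒳, let x⁺ minimize ⟨∇f(x₀), x − x₀⟩ + ⟨λ, g(x)⟩ + ‖x − x₀‖²/(2α) over 𝒳 with ‖g'(x⁺)‖ ≤ M, let x* ∈ 𝒳 satisfy g(x*) ≤ 0, and set λ' := [λ + μ·g'(x⁺)]^+. Then (‖λ'‖² − ‖λ‖²)/(2μ) + f(x₀) ≤ f(x*) + (‖x* − x₀‖² − ‖x* − x⁺‖²)/(2α) + ‖λ‖·v + μ·M²/2 + α·G²/2. -/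

import Mathlib

open scoped RealInnerProductSpace

/-- Entrywise positive projection on `ℝ^m`. -/
noncomputable def posProj {m : ℕ} (v : EuclideanSpace ℝ (Fin m)) :
    EuclideanSpace ℝ (Fin m) := WithLp.toLp 2 (fun i => max (v i) 0)

lemma posProj_norm_le {m : ℕ} (w : EuclideanSpace ℝ (Fin m)) : ‖posProj w‖ ≤ ‖w‖ := by
  rw [EuclideanSpace.norm_eq, EuclideanSpace.norm_eq]
  refine Real.sqrt_le_sqrt (Finset.sum_le_sum fun i _ => ?_)
  have h1 : ‖posProj w i‖ ≤ ‖w i‖ := by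
    simp only [posProj, PiLp.toLp_apply, Real.norm_eq_abs]
    rw [abs_of_nonneg (le_max_right _ _)]
    exact max_le (le_abs_self _) (abs_nonneg _)
  exact pow_le_pow_left₀ (norm_nonneg _) h1 2

lemma grad_le_aux {n : ℕ} {f : EuclideanSpace ℝ (Fin n) → ℝ} (hf : ConvexOn ℝ Set.univ f)
    {x : EuclideanSpace ℝ (Fin n)} (y : EuclideanSpace ℝ (Fin n))
    (hd : DifferentiableAt ℝ f x) :
    ⟪gradient f x, y - x⟫ ≤ f y - f x := by
  set L := AffineMap.lineMap (k := ℝ) x y with hL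
  have hφ : ConvexOn ℝ Set.univ (f ∘ L) := by
    simpa using hf.comp_affineMap L
  have hc : HasDerivAt (fun t : ℝ => L t) (y - x) 0 := by
    have h1 : HasDerivAt (fun t : ℝ => t • (y - x) + x) ((1:ℝ) • (y - x)) 0 :=
      ((hasDerivAt_id (0:ℝ)).smul_const (y - x)).add_const x
    simpa [hL, AffineMap.lineMap_apply] using h1
  have hfd : HasFDerivAt f (InnerProductSpace.toDual ℝ _ (gradient f x)) x :=
    hasGradientAt_iff_hasFDerivAt.mp hd.hasGradientAt
  have hL0 : L (0:ℝ) = x := by simp [hL]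
  have hD : HasDerivAt (f ∘ L) ⟪gradient f x, y - x⟫ 0 := by
    have h2 : HasFDerivAt f (InnerProductSpace.toDual ℝ _ (gradient f x)) (L 0) := by
      rw [hL0]; exact hfd
    have := HasFDerivAt.comp_hasDerivAt (0:ℝ) h2 hc
    simpa using this
  have hs := hφ.le_slope_of_hasDerivAt (Set.mem_univ (0:ℝ)) (Set.mem_univ (1:ℝ)) one_pos hD
  have hL1 : L (1:ℝ) = y := by simp [hL]
  have : slope (f ∘ L) 0 1 = f y - f x := by
    simp [slope_def_field, hL0, hL1]
  linarith [hs, this.le, this.ge]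

set_option maxHeartbeats 1000000 in
/-- Per-slot drift-plus-regret bound at a MOSP step
(inequality (40) in the proof of Theorem 2). -/
theorem drift_plus_regret_bound {n m : ℕ} (hm : 0 < m)
    (X : Set (EuclideanSpace ℝ (Fin n))) (hXne : X.Nonempty) (hXconv : Convex ℝ X)
    (α μ G M v : ℝ) (hα : 0 < α) (hμ : 0 < μ) (hG : 0 ≤ G) (hM : 0 ≤ M) (hv : 0 ≤ v)
    (f : EuclideanSpace ℝ (Fin n) → ℝ) (hfconv : ConvexOn ℝ Set.univ f)
    (x₀ : EuclideanSpace ℝ (Fin n)) (hx₀ : x₀ ∈ X)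
    (hfdiff : DifferentiableAt ℝ f x₀) (hgrad : ‖gradient f x₀‖ ≤ G)
    (lam : EuclideanSpace ℝ (Fin m)) (hlam : ∀ i, 0 ≤ lam i)
    (g g' : EuclideanSpace ℝ (Fin n) → EuclideanSpace ℝ (Fin m))
    (hgconv : ∀ i, ConvexOn ℝ Set.univ fun x => g x i)
    (hvar : ∀ x ∈ X, ‖posProj (g' x - g x)‖ ≤ v)
    (xp : EuclideanSpace ℝ (Fin n)) (hxpX : xp ∈ X)
    (hxpmin : ∀ z ∈ X,
      ⟪gradient f x₀, xp - x₀⟫ + ⟪lam, g xp⟫ + ‖xp - x₀‖ ^ 2 / (2 * α) ≤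
        ⟪gradient f x₀, z - x₀⟫ + ⟪lam, g z⟫ + ‖z - x₀‖ ^ 2 / (2 * α))
    (hgM : ‖g' xp‖ ≤ M)
    (xs : EuclideanSpace ℝ (Fin n)) (hxsX : xs ∈ X) (hxsfeas : ∀ i, g xs i ≤ 0)
    (lam' : EuclideanSpace ℝ (Fin m)) (hlam' : lam' = posProj (lam + μ • g' xp)) :
    (‖lam'‖ ^ 2 - ‖lam‖ ^ 2) / (2 * μ) + f x₀ ≤
      f xs + (‖xs - x₀‖ ^ 2 - ‖xs - xp‖ ^ 2) / (2 * α) + ‖lam‖ * v +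
        μ * M ^ 2 / 2 + α * G ^ 2 / 2 := by
  set q := gradient f x₀ with hq
  -- Step A: drift bound
  have hA : (‖lam'‖ ^ 2 - ‖lam‖ ^ 2) / (2 * μ) ≤ ⟪lam, g' xp⟫ + μ * M ^ 2 / 2 := by
    have h1 : ‖lam'‖ ≤ ‖lam + μ • g' xp‖ := hlam' ▸ posProj_norm_le _
    have h2 : ‖lam + μ • g' xp‖ ^ 2 =
        ‖lam‖ ^ 2 + 2 * μ * ⟪lam, g' xp⟫ + μ ^ 2 * ‖g' xp‖ ^ 2 := by
      rw [norm_add_sq_real, inner_smul_right, norm_smul]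
      rw [Real.norm_eq_abs, abs_of_pos hμ]
      ring
    have h3 : ‖lam'‖ ^ 2 ≤ ‖lam + μ • g' xp‖ ^ 2 :=
      pow_le_pow_left₀ (norm_nonneg _) h1 2
    have h4 : ‖g' xp‖ ^ 2 ≤ M ^ 2 := pow_le_pow_left₀ (norm_nonneg _) hgM 2
    rw [div_le_iff₀ (by positivity)]
    nlinarith [h3, h2, h4, hμ.le]
  -- Step B: constraint variation
  have hB : ⟪lam, g' xp⟫ ≤ ⟪lam, g xp⟫ + ‖lam‖ * v := by
    have h1 : ⟪lam, g' xp - g xp⟫ ≤ ⟪lam, posProj (g' xp - g xp)⟫ := by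
      simp only [PiLp.inner_apply, RCLike.inner_apply, conj_trivial]
      refine Finset.sum_le_sum fun i _ => ?_
      exact mul_le_mul_of_nonneg_right (le_max_left _ _) (hlam i)
    have h2 : ⟪lam, posProj (g' xp - g xp)⟫ ≤ ‖lam‖ * ‖posProj (g' xp - g xp)‖ :=
      real_inner_le_norm _ _
    have h3 : ‖lam‖ * ‖posProj (g' xp - g xp)‖ ≤ ‖lam‖ * v :=
      mul_le_mul_of_nonneg_left (hvar xp hxpX) (norm_nonneg _)
    have h4 : ⟪lam, g' xp⟫ = ⟪lam, g xp⟫ + ⟪lam, g' xp - g xp⟫ := by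
      rw [inner_sub_right]; ring
    linarith
  -- Step C: strong convexity of the proximal objective
  have hC : ⟪q, xp - x₀⟫ + ⟪lam, g xp⟫ + ‖xp - x₀‖ ^ 2 / (2 * α) + ‖xs - xp‖ ^ 2 / (2 * α) ≤
      ⟪q, xs - x₀⟫ + ⟪lam, g xs⟫ + ‖xs - x₀‖ ^ 2 / (2 * α) := by
    set c := ‖xs - xp‖ ^ 2 / (2 * α) with hc
    have hcnn : 0 ≤ c := by positivity
    have key : ∀ θ : ℝ, 0 < θ → θ < 1 →
        ⟪q, xp - x₀⟫ + ⟪lam, g xp⟫ + ‖xp - x₀‖ ^ 2 / (2 * α) + (1 - θ) * c ≤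
          ⟪q, xs - x₀⟫ + ⟪lam, g xs⟫ + ‖xs - x₀‖ ^ 2 / (2 * α) := by
      intro θ hθ0 hθ1
      set w : EuclideanSpace ℝ (Fin n) := xp + θ • (xs - xp) with hw
      have hwX : w ∈ X := by
        have : w = (1 - θ) • xp + θ • xs := by
          rw [hw]; module
        rw [this]
        exact hXconv hxpX hxsX (by linarith) hθ0.le (by ring)
      have hmin := hxpmin w hwX
      -- linear part
      have hlin : ⟪q, w - x₀⟫ = (1 - θ) * ⟪q, xp - x₀⟫ + θ * ⟪q, xs - x₀⟫ := by
        have : w - x₀ = (1 - θ) • (xp - x₀) + θ • (xs - x₀) := by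
          rw [hw]; module
        rw [this, inner_add_right, inner_smul_right, inner_smul_right]
      -- constraint part
      have hcon : ⟪lam, g w⟫ ≤ (1 - θ) * ⟪lam, g xp⟫ + θ * ⟪lam, g xs⟫ := by
        simp only [PiLp.inner_apply, RCLike.inner_apply, conj_trivial,
          Finset.mul_sum, ← Finset.sum_add_distrib]
        refine Finset.sum_le_sum fun i _ => ?_
        have hgi : g w i ≤ (1 - θ) * g xp i + θ * g xs i := by
          have hwcomb : w = (1 - θ) • xp + θ • xs := by rw [hw]; module
          have := (hgconv i).2 (Set.mem_univ xp) (Set.mem_univ xs)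
            (by linarith : (0:ℝ) ≤ 1 - θ) hθ0.le (by ring : (1 - θ) + θ = 1)
          simpa [hwcomb, smul_eq_mul] using this
        nlinarith [hlam i, hgi]
      -- quadratic part
      have hquad : ‖w - x₀‖ ^ 2 = (1 - θ) * ‖xp - x₀‖ ^ 2 + θ * ‖xs - x₀‖ ^ 2
          - θ * (1 - θ) * ‖xs - xp‖ ^ 2 := by
        have hwd : w - x₀ = (1 - θ) • (xp - x₀) + θ • (xs - x₀) := by rw [hw]; module
        have e1 : ‖(1 - θ) • (xp - x₀) + θ • (xs - x₀)‖ ^ 2 =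
            (1 - θ) ^ 2 * ‖xp - x₀‖ ^ 2 + 2 * ((1 - θ) * θ) * ⟪xp - x₀, xs - x₀⟫
              + θ ^ 2 * ‖xs - x₀‖ ^ 2 := by
          rw [norm_add_sq_real, real_inner_smul_left, real_inner_smul_right,
            norm_smul, norm_smul, Real.norm_eq_abs, Real.norm_eq_abs,
            abs_of_nonneg (by linarith : (0:ℝ) ≤ 1 - θ), abs_of_pos hθ0]
          ring
        have e2 : ‖xs - xp‖ ^ 2 = ‖xs - x₀‖ ^ 2 - 2 * ⟪xp - x₀, xs - x₀⟫ + ‖xp - x₀‖ ^ 2 := by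
          have : xs - xp = (xs - x₀) - (xp - x₀) := by abel
          rw [this, norm_sub_sq_real, real_inner_comm]
        rw [hwd, e1, e2]; ring
      -- combine
      have h2α : (0:ℝ) < 2 * α := by linarith
      have hmain : θ * (⟪q, xp - x₀⟫ + ⟪lam, g xp⟫ + ‖xp - x₀‖ ^ 2 / (2 * α)
            + (1 - θ) * c) ≤
          θ * (⟪q, xs - x₀⟫ + ⟪lam, g xs⟫ + ‖xs - x₀‖ ^ 2 / (2 * α)) := by
        have hdiv : ‖w - x₀‖ ^ 2 / (2 * α) = (1 - θ) * (‖xp - x₀‖ ^ 2 / (2 * α))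
            + θ * (‖xs - x₀‖ ^ 2 / (2 * α)) - θ * (1 - θ) * c := by
          rw [hquad, hc]; ring
        linarith [hmin, hlin.le, hlin.ge, hcon, hdiv.le, hdiv.ge]
      exact le_of_mul_le_mul_left hmain hθ0
    refine le_of_forall_pos_le_add fun ε hε => ?_
    have hθdef : 0 < min (1/2) (ε / (c + 1)) := by positivity
    have hθ1 : min (1/2) (ε / (c + 1)) < 1 :=
      lt_of_le_of_lt (min_le_left _ _) (by norm_num)
    have hk := key _ hθdef hθ1
    have hθc : min (1/2) (ε / (c + 1)) * c ≤ ε := by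
      have h5 : min (1/2) (ε / (c + 1)) ≤ ε / (c + 1) := min_le_right _ _
      have h6 : min (1/2) (ε / (c + 1)) * c ≤ (ε / (c + 1)) * c :=
        mul_le_mul_of_nonneg_right h5 hcnn
      have h7 : (ε / (c + 1)) * c ≤ ε := by
        rw [div_mul_eq_mul_div, div_le_iff₀ (by linarith)]
        nlinarith
      linarith
    linarith
  -- Step D: feasibility
  have hD : ⟪lam, g xs⟫ ≤ 0 := by
    simp only [PiLp.inner_apply, RCLike.inner_apply, conj_trivial]
    exact Finset.sum_nonpos fun i _ => mul_nonpos_of_nonpos_of_nonneg (hxsfeas i) (hlam i)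
  -- Step E: gradient inequality
  have hE : ⟪q, xs - x₀⟫ ≤ f xs - f x₀ := grad_le_aux hfconv xs hfdiff
  -- Step F: bound the proximal drift of xp
  have hF : -(⟪q, xp - x₀⟫ + ‖xp - x₀‖ ^ 2 / (2 * α)) ≤ α * G ^ 2 / 2 := by
    have h1 : -⟪q, xp - x₀⟫ ≤ G * ‖xp - x₀‖ := by
      have := real_inner_le_norm q (x₀ - xp)
      have h2 : ⟪q, x₀ - xp⟫ = -⟪q, xp - x₀⟫ := by
        rw [show x₀ - xp = -(xp - x₀) from by abel, inner_neg_right]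
      have h3 : ‖q‖ * ‖x₀ - xp‖ ≤ G * ‖xp - x₀‖ := by
        rw [norm_sub_rev]
        exact mul_le_mul_of_nonneg_right hgrad (norm_nonneg _)
      linarith
    have h4 : G * ‖xp - x₀‖ ≤ α * G ^ 2 / 2 + ‖xp - x₀‖ ^ 2 / (2 * α) := by
      rw [← sub_nonneg]
      have : α * G ^ 2 / 2 + ‖xp - x₀‖ ^ 2 / (2 * α) - G * ‖xp - x₀‖
          = (α * G - ‖xp - x₀‖) ^ 2 / (2 * α) := by
        field_simp; ring
      rw [this]; positivity
    linarith
  have hsplit : (‖xs - x₀‖ ^ 2 - ‖xs - xp‖ ^ 2) / (2 * α)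
      = ‖xs - x₀‖ ^ 2 / (2 * α) - ‖xs - xp‖ ^ 2 / (2 * α) := by ring
  linarith [hA, hB, hC, hD, hE, hF]
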